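/- ζ(3) = (4/7) ∫₀^{π/2} x(π - 2x) cot(x) dx. -/

import Mathlib

open Real MeasureTheory Filter Set

theorem cot_telescope (N : ℕ) (x : ℝ) (hs : Real.sin x ≠ 0) :
    Real.cot x = 2 * ∑ k ∈ Finset.range N, Real.sin (2*(k+1)*x) + Real.cos ((2*N+1)*x) / Real.sin x := by
  induction N with
  | zero => simp [Real.cot_eq_cos_div_sin]
  | succ n ih =>
    rw [Finset.sum_range_succ, ih]
    push_cast
    have h : Real.cos ((2*(n:ℝ)+1)*x) - Real.cos ((2*((n:ℝ)+1)+1)*x) = 2 * Real.sin (2*((n:ℝ)+1)*x) * Real.sin x := by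
      rw [Real.cos_sub_cos]
      ring_nf
      rw [Real.sin_neg]
      ring
    rw [add_div' _ _ _ hs, add_div' _ _ _ hs]
    congr 1
    linarith [h]

theorem sin_integral (n : ℕ) (hn : 1 ≤ n) :
    ∫ x in (0:ℝ)..(π/2), x*(π-2*x)*Real.sin (2*n*x) = (1-(-1:ℝ)^n)/(2*(n:ℝ)^3) := by
  have hnpos : (0:ℝ) < n := by exact_mod_cast hn
  set a : ℝ := 2*n with ha
  have ha0 : a ≠ 0 := by positivity
  set F : ℝ → ℝ := fun x => π*Real.sin (a*x)/a^2 - π*x*Real.cos (a*x)/a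
      - 4*x*Real.sin (a*x)/a^2 + (2*x^2/a - 4/a^3) * Real.cos (a*x) with hF
  have hder : ∀ y ∈ Set.uIcc (0:ℝ) (π/2), HasDerivAt F (y*(π-2*y)*Real.sin (a*y)) y := by
    intro y _
    have hs : HasDerivAt (fun x : ℝ => Real.sin (a*x)) (Real.cos (a*y) * a) y := by
      have := (Real.hasDerivAt_sin (a*y)).comp y ((hasDerivAt_id y).const_mul a)
      simpa [Function.comp_def] using this
    have hc : HasDerivAt (fun x : ℝ => Real.cos (a*x)) (-Real.sin (a*y) * a) y := by
      have := (Real.hasDerivAt_cos (a*y)).comp y ((hasDerivAt_id y).const_mul a)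
      simpa [Function.comp_def] using this
    have h1 := ((hs.const_mul π).div_const (a^2)).sub
      ((((hasDerivAt_id y).const_mul π).mul hc).div_const a)
    have h2 := (((hasDerivAt_id y).const_mul (4:ℝ)).mul hs).div_const (a^2)
    have h3 := (((hasDerivAt_pow 2 y).const_mul (2:ℝ)).div_const a |>.sub_const (4/a^3)).mul hc
    have hcomb := (h1.sub h2).add h3
    simp only [id_eq] at hcomb
    have heq : π * (Real.cos (a*y) * a) / a ^ 2 -
          (π * 1 * Real.cos (a*y) + π * y * (-Real.sin (a*y) * a)) / a -
          (4 * 1 * Real.sin (a*y) + 4 * y * (Real.cos (a*y) * a)) / a ^ 2 +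
          (2 * (↑2 * y ^ (2-1)) / a * Real.cos (a*y) +
            (2 * y ^ 2 / a - 4 / a ^ 3) * (-Real.sin (a*y) * a))
        = y*(π-2*y)*Real.sin (a*y) := by
      field_simp
      ring
    rw [hF]
    exact heq ▸ hcomb
  have hint : IntervalIntegrable (fun x => x*(π-2*x)*Real.sin (a*x)) MeasureTheory.volume 0 (π/2) :=
    (Continuous.intervalIntegrable (by continuity) _ _)
  have hmain := intervalIntegral.integral_eq_sub_of_hasDerivAt hder hint
  rw [show (2*(n:ℝ)) = a from rfl] at *
  rw [hmain]
  have hpi : a * (π/2) = n * π := by rw [ha]; ring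
  have hcos : Real.cos (a * (π/2)) = (-1:ℝ)^n := by
    rw [hpi]; simpa using Real.cos_nat_mul_pi_sub 0 n
  have hsin : Real.sin (a * (π/2)) = 0 := by rw [hpi]; exact Real.sin_nat_mul_pi n
  rw [hF]
  simp only [hsin, hcos]
  rw [ha]
  field_simp
  simp only [a]
  norm_num
  ring

set_option maxHeartbeats 1000000 in

theorem odd_sum :
    HasSum (fun k : ℕ => (1-(-1:ℝ)^(k+1))/((k:ℝ)+1)^3)
      ((7/4) * ∑' n : ℕ, 1 / ((n : ℝ) + 1) ^ 3) := by
  set f : ℕ → ℝ := fun n => 1 / ((n : ℝ) + 1) ^ 3 with hf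
  have hsum : Summable f := by
    have h1 := (Real.summable_one_div_nat_pow (p := 3)).mpr (by norm_num)
    have h2 := (summable_nat_add_iff (f := fun n : ℕ => 1/(n:ℝ)^3) 1).mpr h1
    rw [hf]
    convert h2 using 2 with n
    · rfl
    push_cast
    ring
  set S := ∑' n : ℕ, f n with hS
  have hSsum : HasSum f S := hsum.hasSum
  have hodd : HasSum (fun m : ℕ => f (2*m+1)) ((1/8)*S) := by
    have h8 := hSsum.mul_left (1/8)
    convert h8 using 2 with m
    · rfl
    simp only [hf]
    push_cast
    field_simp
    ring
  have heven_summ : Summable (fun m : ℕ => f (2*m)) := by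
    apply hsum.comp_injective
    intro a b hab
    omega
  have heven : HasSum (fun m : ℕ => f (2*m)) ((7/8)*S) := by
    have hE := heven_summ.hasSum
    have huniq := (hE.even_add_odd hodd).unique hSsum
    have h78 : ∑' m : ℕ, f (2*m) = (7/8)*S := by linarith
    rwa [h78] at hE
  have h2 : HasSum (fun m : ℕ => (fun k : ℕ => (1-(-1:ℝ)^(k+1))/((k:ℝ)+1)^3) (2*m))
      ((7/4)*S) := by
    have h2f := heven.mul_left 2
    have hfun : (fun m : ℕ => (fun k : ℕ => (1-(-1:ℝ)^(k+1))/((k:ℝ)+1)^3) (2*m))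
        = fun i : ℕ => 2 * f (2*i) := by
      funext m
      simp only [hf]
      rw [show (-1:ℝ)^(2*m+1) = -1 by rw [pow_succ, pow_mul]; norm_num]
      push_cast
      ring
    rw [hfun, show (7/4)*S = 2*((7/8)*S) by ring]
    exact h2f
  have h3 : HasSum (fun m : ℕ => (fun k : ℕ => (1-(-1:ℝ)^(k+1))/((k:ℝ)+1)^3) (2*m+1)) 0 := by
    have hfun : (fun m : ℕ => (fun k : ℕ => (1-(-1:ℝ)^(k+1))/((k:ℝ)+1)^3) (2*m+1))
        = fun _ : ℕ => (0:ℝ) := by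
      funext m
      have hp : (-1:ℝ)^(2*m+1+1) = 1 := Even.neg_one_pow ⟨m+1, by ring⟩
      simp [hp]
    rw [hfun]
    exact hasSum_zero
  have hfin := HasSum.even_add_odd (f := fun k : ℕ => (1-(-1:ℝ)^(k+1))/((k:ℝ)+1)^3) h2 h3
  rw [add_zero] at hfin
  exact hfin

lemma g_bound : ∀ x ∈ Set.Ioc (0:ℝ) (π/2), |x*(π-2*x)/Real.sin x| ≤ π^2/2 := by
  intro x hx
  obtain ⟨hx0, hx2⟩ := hx
  have hsin : 2/π * x ≤ Real.sin x := Real.mul_le_sin hx0.le hx2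
  have hsinpos : 0 < Real.sin x := lt_of_lt_of_le (by positivity) hsin
  have hnum0 : 0 ≤ x*(π-2*x) := by nlinarith [Real.pi_pos]
  rw [abs_of_nonneg (div_nonneg hnum0 hsinpos.le)]
  have h1 : x*(π-2*x) ≤ x*π := by nlinarith
  have h2 : x*(π-2*x)/Real.sin x ≤ (x*π)/(2/π*x) :=
    div_le_div₀ (by positivity) h1 (by positivity) hsin
  have h3 : (x*π)/(2/π*x) = π^2/2 := by
    field_simp
  linarith [h2, h3.le]

lemma g_meas (c : ℝ) (μ : MeasureTheory.Measure ℝ) :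
    AEStronglyMeasurable (fun x => Real.cos (c*x) * (x*(π-2*x)/Real.sin x)) μ := by
  apply Measurable.aestronglyMeasurable
  apply Measurable.mul
  · exact (Real.continuous_cos.comp (continuous_const.mul continuous_id)).measurable
  · apply Measurable.div
    · exact (continuous_id.mul (continuous_const.sub (continuous_const.mul continuous_id))).measurable
    · exact Real.continuous_sin.measurable

lemma g_integrableOn (c : ℝ) :
    IntegrableOn (fun x => Real.cos (c*x) * (x*(π-2*x)/Real.sin x)) (Set.Ioc 0 (π/2)) := by
  apply Measure.integrableOn_of_bounded (M := π^2/2) (by simp) (g_meas c _)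
  rw [ae_restrict_iff' measurableSet_Ioc]
  filter_upwards with x hx
  have hb := g_bound x hx
  rw [Real.norm_eq_abs, abs_mul]
  calc |Real.cos (c*x)| * |x*(π-2*x)/Real.sin x| ≤ 1 * (π^2/2) :=
        mul_le_mul (Real.abs_cos_le_one _) hb (abs_nonneg _) zero_le_one
    _ = π^2/2 := one_mul _

lemma remainder_tendsto :
    Filter.Tendsto (fun N : ℕ => ∫ x in (0:ℝ)..(π/2),
      Real.cos ((2*N+1)*x) * (x*(π-2*x)/Real.sin x)) atTop (nhds 0) := by
  set G : ℝ → ℂ := Set.indicator (Set.Ioc 0 (π/2)) (fun x => ((x*(π-2*x)/Real.sin x : ℝ) : ℂ)) with hG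
  have hGint : Integrable G := by
    rw [hG, integrable_indicator_iff measurableSet_Ioc]
    have h0 := (g_integrableOn 0)
    simp only [zero_mul, Real.cos_zero, one_mul] at h0
    exact h0.ofReal
  have hRL := Real.tendsto_integral_exp_smul_cocompact G
  simp_rw [Circle.smul_def, Real.fourierChar_apply, smul_eq_mul] at hRL
  have hw : Filter.Tendsto (fun N : ℕ => (2*(N:ℝ)+1)/(2*π)) atTop (Filter.cocompact ℝ) := by
    rw [cocompact_eq_atBot_atTop]
    apply Filter.Tendsto.mono_right _ le_sup_right
    apply Filter.Tendsto.atTop_div_const (by positivity)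
    apply Filter.tendsto_atTop_add_const_right
    exact (tendsto_natCast_atTop_atTop (R := ℝ)).const_mul_atTop two_pos
  have hcomp := hRL.comp hw
  have hre := (Complex.continuous_re.tendsto 0).comp hcomp
  simp only [Complex.zero_re, Function.comp_def] at hre
  have hkey : ∀ N : ℕ, (∫ v : ℝ,
      Complex.exp (((2*π*(-(v * ((2*(N:ℝ)+1)/(2*π)))) : ℝ) : ℂ) * Complex.I) * G v).re
      = ∫ x in (0:ℝ)..(π/2), Real.cos ((2*N+1)*x) * (x*(π-2*x)/Real.sin x) := by
    intro N
    have hEint : Integrable (fun v : ℝ =>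
        Complex.exp (((2*π*(-(v * ((2*(N:ℝ)+1)/(2*π)))) : ℝ) : ℂ) * Complex.I) * G v) := by
      apply hGint.bdd_mul (c := 1)
      · have hc : Continuous (fun v : ℝ => 2*π*(-(v * ((2*(N:ℝ)+1)/(2*π))))) :=
          continuous_const.mul ((continuous_id.mul continuous_const).neg)
        exact (Complex.continuous_exp.comp
          ((Complex.continuous_ofReal.comp hc).mul continuous_const)).aestronglyMeasurable
      · filter_upwards with v
        rw [Complex.norm_exp_ofReal_mul_I]
    rw [show (∫ v : ℝ, Complex.exp (((2*π*(-(v * ((2*(N:ℝ)+1)/(2*π)))) : ℝ) : ℂ) * Complex.I) * G v).re = RCLike.re (∫ v : ℝ, Complex.exp (((2*π*(-(v * ((2*(N:ℝ)+1)/(2*π)))) : ℝ) : ℂ) * Complex.I) * G v) from rfl, ← integral_re hEint]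
    simp only [RCLike.re_to_complex]
    have hfun : (fun v : ℝ =>
        (Complex.exp (((2*π*(-(v * ((2*(N:ℝ)+1)/(2*π)))) : ℝ) : ℂ) * Complex.I) * G v).re)
        = Set.indicator (Set.Ioc 0 (π/2))
            (fun x => Real.cos ((2*N+1)*x) * (x*(π-2*x)/Real.sin x)) := by
      funext v
      by_cases hv : v ∈ Set.Ioc (0:ℝ) (π/2)
      · rw [hG, Set.indicator_of_mem hv, Set.indicator_of_mem hv]
        have harg : 2*π*(-(v * ((2*(N:ℝ)+1)/(2*π)))) = -((2*N+1)*v) := by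
          have hpi : π ≠ 0 := Real.pi_ne_zero
          field_simp
        rw [harg]
        simp only [Complex.mul_re, Complex.ofReal_re, Complex.ofReal_im, mul_zero, sub_zero,
          Complex.exp_ofReal_mul_I_re, Real.cos_neg]
      · rw [hG, Set.indicator_of_notMem hv, Set.indicator_of_notMem hv, mul_zero,
          Complex.zero_re]
    rw [hfun, MeasureTheory.integral_indicator measurableSet_Ioc,
      intervalIntegral.integral_of_le (by positivity : (0:ℝ) ≤ π/2)]
  exact hre.congr hkey

theorem zeta3_cot_integral :
    (∑' n : ℕ, 1 / ((n : ℝ) + 1) ^ 3) =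
      (4 / 7) * ∫ x in (0 : ℝ)..(π / 2), x * (π - 2 * x) * Real.cot x := by
  have h0le : (0:ℝ) ≤ π/2 := by positivity
  set c : ℝ := ∫ x in (0 : ℝ)..(π / 2), x * (π - 2 * x) * Real.cot x with hc
  have key : ∀ N : ℕ, c = (∑ k ∈ Finset.range N, (1-(-1:ℝ)^(k+1))/((k:ℝ)+1)^3)
      + ∫ x in (0:ℝ)..(π/2), Real.cos ((2*N+1)*x) * (x*(π-2*x)/Real.sin x) := by
    intro N
    have hcongr : c = ∫ x in (0:ℝ)..(π/2),
        ((∑ k ∈ Finset.range N, 2*(x*(π-2*x)*Real.sin (2*(k+1)*x)))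
          + Real.cos ((2*N+1)*x)*(x*(π-2*x)/Real.sin x)) := by
      rw [hc, intervalIntegral.integral_of_le h0le, intervalIntegral.integral_of_le h0le]
      apply setIntegral_congr_fun measurableSet_Ioc
      intro x hx
      have hsp : 0 < Real.sin x := Real.sin_pos_of_pos_of_lt_pi hx.1
        (lt_of_le_of_lt hx.2 (by linarith [Real.pi_pos]))
      have h1 : x*(π-2*x) * (2 * ∑ k ∈ Finset.range N, Real.sin (2*((k:ℝ)+1)*x))
          = ∑ k ∈ Finset.range N, 2*(x*(π-2*x)*Real.sin (2*((k:ℝ)+1)*x)) := by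
        rw [show x*(π-2*x) * (2 * ∑ k ∈ Finset.range N, Real.sin (2*((k:ℝ)+1)*x))
            = (∑ k ∈ Finset.range N, Real.sin (2*((k:ℝ)+1)*x)) * (2*(x*(π-2*x))) from by ring,
          Finset.sum_mul]
        exact Finset.sum_congr rfl (fun k _ => by ring)
      show x*(π-2*x) * Real.cot x = _
      rw [cot_telescope N x hsp.ne', mul_add, h1]
      ring
    rw [hcongr]
    have hcont : ∀ b:ℝ, Continuous (fun x:ℝ => 2*(x*(π-2*x)*Real.sin (b*x))) := fun b =>
      continuous_const.mul ((continuous_id.mul (continuous_const.sub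
        (continuous_const.mul continuous_id))).mul
          (Real.continuous_sin.comp (continuous_const.mul continuous_id)))
    have hF1int : ∀ k ∈ Finset.range N,
        IntervalIntegrable (fun x => 2*(x*(π-2*x)*Real.sin (2*((k:ℝ)+1)*x)))
          MeasureTheory.volume 0 (π/2) :=
      fun k _ => (Continuous.intervalIntegrable (hcont (2*((k:ℝ)+1))) _ _)
    have hF2int : IntervalIntegrable (fun x => Real.cos ((2*(N:ℝ)+1)*x)*(x*(π-2*x)/Real.sin x))
        MeasureTheory.volume 0 (π/2) := by
      rw [intervalIntegrable_iff, uIoc_of_le h0le]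
      exact g_integrableOn _
    have hsumint : IntervalIntegrable
        (fun x => ∑ k ∈ Finset.range N, 2*(x*(π-2*x)*Real.sin (2*((k:ℝ)+1)*x)))
          MeasureTheory.volume 0 (π/2) := by
      apply Continuous.intervalIntegrable
      exact continuous_finset_sum _ (fun k _ => hcont (2*((k:ℝ)+1)))
    rw [intervalIntegral.integral_add hsumint hF2int,
      intervalIntegral.integral_finset_sum hF1int]
    congr 1
    apply Finset.sum_congr rfl
    intro k _
    rw [intervalIntegral.integral_const_mul]
    have hks := sin_integral (k+1) (Nat.le_add_left 1 k)
    push_cast at hks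
    rw [hks]
    have hkne : ((k:ℝ)+1) ≠ 0 := by positivity
    field_simp
  -- limits
  have hsum := odd_sum.tendsto_sum_nat
  have hR := remainder_tendsto
  have hlim : Filter.Tendsto (fun N : ℕ => (∑ k ∈ Finset.range N, (1-(-1:ℝ)^(k+1))/((k:ℝ)+1)^3)
      + ∫ x in (0:ℝ)..(π/2), Real.cos ((2*N+1)*x) * (x*(π-2*x)/Real.sin x)) atTop
      (nhds ((7/4) * ∑' n : ℕ, 1 / ((n : ℝ) + 1) ^ 3)) := by
    have := hsum.add hR
    simpa using this
  have hconst : Filter.Tendsto (fun _ : ℕ => c) atTop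
      (nhds ((7/4) * ∑' n : ℕ, 1 / ((n : ℝ) + 1) ^ 3)) := by
    apply hlim.congr
    intro N
    exact (key N).symm
  have := tendsto_nhds_unique hconst tendsto_const_nhds
  rw [← this]
  ring
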